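/- For all positive integers k, l, m, the tree G(k, l, m) has exactly k·((m+1)^l − m^l)^k minimum total dominating sets, i.e., Γ_t(G(k,l,m)) = k((m+1)^l − m^l)^k. -/
import Mathlib


/-- A set `D` of vertices is a total dominating set if every vertex has a neighbour in `D`. -/
def IsTotalDominatingSet {V : Type*} (G : SimpleGraph V) (D : Finset V) : Prop :=
  ∀ v : V, ∃ w ∈ D, G.Adj v w

/-- The total domination number: the minimum size of a total dominating set. -/
noncomputable def totalDominationNumber {V : Type*} [Fintype V] (G : SimpleGraph V) : ℕ :=
  sInf {n | ∃ D : Finset V, IsTotalDominatingSet G D ∧ D.card = n}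

/-- The number of minimum total dominating sets. -/
noncomputable def numMinTotalDomSets {V : Type*} [Fintype V] (G : SimpleGraph V) : ℕ :=
  Set.ncard {D : Finset V | IsTotalDominatingSet G D ∧ D.card = totalDominationNumber G}

/-- The tree `G(k,l,m)`: root `y`, children `x_a` (`a : Fin k`), grandchildren `w_{a,b}`
(`b : Fin l`), each `w_{a,b}` with a single child `v_{a,b}`, each `v_{a,b}` with `m` leaves
`u_{a,b,c}` (`c : Fin m`). -/
def Gklm (k l m : ℕ) :
    SimpleGraph (Unit ⊕ (Fin k ⊕ ((Fin k × Fin l) ⊕ ((Fin k × Fin l) ⊕ (Fin k × Fin l × Fin m))))) :=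
  SimpleGraph.fromRel (fun p q =>
    (∃ a : Fin k, p = Sum.inl () ∧ q = Sum.inr (Sum.inl a)) ∨
    (∃ (a : Fin k) (b : Fin l),
      p = Sum.inr (Sum.inl a) ∧ q = Sum.inr (Sum.inr (Sum.inl (a, b)))) ∨
    (∃ (a : Fin k) (b : Fin l),
      p = Sum.inr (Sum.inr (Sum.inl (a, b))) ∧
      q = Sum.inr (Sum.inr (Sum.inr (Sum.inl (a, b))))) ∨
    (∃ (a : Fin k) (b : Fin l) (c : Fin m),
      p = Sum.inr (Sum.inr (Sum.inr (Sum.inl (a, b)))) ∧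
      q = Sum.inr (Sum.inr (Sum.inr (Sum.inr (a, b, c))))))

namespace Gp
variable {k l m : ℕ}

abbrev V (k l m : ℕ) := Unit ⊕ (Fin k ⊕ ((Fin k × Fin l) ⊕ ((Fin k × Fin l) ⊕ (Fin k × Fin l × Fin m))))

def y : V k l m := Sum.inl ()
def X (a : Fin k) : V k l m := Sum.inr (Sum.inl a)
def W (a : Fin k) (b : Fin l) : V k l m := Sum.inr (Sum.inr (Sum.inl (a,b)))
def Vt (a : Fin k) (b : Fin l) : V k l m := Sum.inr (Sum.inr (Sum.inr (Sum.inl (a,b))))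
def U (a : Fin k) (b : Fin l) (c : Fin m) : V k l m := Sum.inr (Sum.inr (Sum.inr (Sum.inr (a,b,c))))

lemma adj_y (q : V k l m) : (Gklm k l m).Adj y q ↔ ∃ a, q = X a := by
  simp only [Gklm, SimpleGraph.fromRel_adj, y, X]; aesop

lemma adj_X (a : Fin k) (q : V k l m) :
    (Gklm k l m).Adj (X a) q ↔ q = y ∨ ∃ b, q = W a b := by
  simp only [Gklm, SimpleGraph.fromRel_adj, y, X, W]; aesop

lemma adj_W (a : Fin k) (b : Fin l) (q : V k l m) :
    (Gklm k l m).Adj (W a b) q ↔ q = X a ∨ q = Vt a b := by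
  simp only [Gklm, SimpleGraph.fromRel_adj, X, W, Vt]; aesop

lemma adj_Vt (a : Fin k) (b : Fin l) (q : V k l m) :
    (Gklm k l m).Adj (Vt a b) q ↔ q = W a b ∨ ∃ c, q = U a b c := by
  simp only [Gklm, SimpleGraph.fromRel_adj, W, Vt, U]; aesop

lemma adj_U (a : Fin k) (b : Fin l) (c : Fin m) (q : V k l m) :
    (Gklm k l m).Adj (U a b c) q ↔ q = Vt a b := by
  simp only [Gklm, SimpleGraph.fromRel_adj, Vt, U]; aesop

lemma tds_iff (D : Finset (V k l m)) :
    IsTotalDominatingSet (Gklm k l m) D ↔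
      (∃ a, X a ∈ D) ∧
      (∀ a : Fin k, y ∈ D ∨ ∃ b, W a b ∈ D) ∧
      (∀ (a : Fin k) (b : Fin l), X a ∈ D ∨ Vt a b ∈ D) ∧
      (∀ (a : Fin k) (b : Fin l), W a b ∈ D ∨ ∃ c, U a b c ∈ D) ∧
      (∀ (a : Fin k) (b : Fin l) (_ : Fin m), Vt a b ∈ D) := by
  constructor
  · intro h
    refine ⟨?_, fun a => ?_, fun a b => ?_, fun a b => ?_, fun a b c => ?_⟩
    · obtain ⟨w, hw, hadj⟩ := h y; rw [adj_y] at hadj; aesop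
    · obtain ⟨w, hw, hadj⟩ := h (X a); rw [adj_X] at hadj; aesop
    · obtain ⟨w, hw, hadj⟩ := h (W a b); rw [adj_W] at hadj; aesop
    · obtain ⟨w, hw, hadj⟩ := h (Vt a b); rw [adj_Vt] at hadj; aesop
    · obtain ⟨w, hw, hadj⟩ := h (U a b c); rw [adj_U] at hadj; aesop
  · rintro ⟨h1, h2, h3, h4, h5⟩ v
    match v with
    | Sum.inl () =>
      obtain ⟨a, ha⟩ := h1
      exact ⟨X a, ha, by rw [show (Sum.inl () : V k l m) = y from rfl, adj_y]; exact ⟨a, rfl⟩⟩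
    | Sum.inr (Sum.inl a) =>
      rcases h2 a with hy | ⟨b, hb⟩
      · exact ⟨y, hy, by rw [show (Sum.inr (Sum.inl a) : V k l m) = X a from rfl, adj_X]; left; rfl⟩
      · exact ⟨W a b, hb, by rw [show (Sum.inr (Sum.inl a) : V k l m) = X a from rfl, adj_X]; right; exact ⟨b, rfl⟩⟩
    | Sum.inr (Sum.inr (Sum.inl (a, b))) =>
      rcases h3 a b with hx | hv
      · exact ⟨X a, hx, by rw [show (Sum.inr (Sum.inr (Sum.inl (a,b))) : V k l m) = W a b from rfl, adj_W]; left; rfl⟩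
      · exact ⟨Vt a b, hv, by rw [show (Sum.inr (Sum.inr (Sum.inl (a,b))) : V k l m) = W a b from rfl, adj_W]; right; rfl⟩
    | Sum.inr (Sum.inr (Sum.inr (Sum.inl (a, b)))) =>
      rcases h4 a b with hw | ⟨c, hc⟩
      · exact ⟨W a b, hw, by rw [show (Sum.inr (Sum.inr (Sum.inr (Sum.inl (a,b)))) : V k l m) = Vt a b from rfl, adj_Vt]; left; rfl⟩
      · exact ⟨U a b c, hc, by rw [show (Sum.inr (Sum.inr (Sum.inr (Sum.inl (a,b)))) : V k l m) = Vt a b from rfl, adj_Vt]; right; exact ⟨c, rfl⟩⟩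
    | Sum.inr (Sum.inr (Sum.inr (Sum.inr (a, b, c)))) =>
      exact ⟨Vt a b, h5 a b c, by rw [show (Sum.inr (Sum.inr (Sum.inr (Sum.inr (a,b,c)))) : V k l m) = U a b c from rfl, adj_U]⟩

def cls : V k l m → Fin 4
  | Sum.inl _ => 0
  | Sum.inr (Sum.inl _) => 1
  | Sum.inr (Sum.inr (Sum.inl _)) => 2
  | Sum.inr (Sum.inr (Sum.inr (Sum.inl _))) => 3
  | Sum.inr (Sum.inr (Sum.inr (Sum.inr _))) => 2

def proj : V k l m → Option (Fin k × Fin l)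
  | Sum.inr (Sum.inr (Sum.inl p)) => some p
  | Sum.inr (Sum.inr (Sum.inr (Sum.inr (a, b, _)))) => some (a, b)
  | _ => none

lemma Vt_injective : Function.Injective (fun p : Fin k × Fin l => (Vt p.1 p.2 : V k l m)) := by
  intro p q h; simpa [Vt] using h

lemma card_decomp (D : Finset (V k l m)) :
    D.card = ∑ j : Fin 4, (D.filter fun v => cls v = j).card :=
  Finset.card_eq_sum_card_fiberwise (fun x _ => Finset.mem_univ (cls x))

lemma fiber3_bound (D : Finset (V k l m)) (h5 : ∀ a b, Vt a b ∈ D) :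
    k * l ≤ (D.filter fun v => cls v = 3).card := by
  have hsub : Finset.univ.image (fun p : Fin k × Fin l => (Vt p.1 p.2 : V k l m)) ⊆
      D.filter fun v => cls v = 3 := by
    intro v hv
    simp only [Finset.mem_image] at hv
    obtain ⟨p, -, rfl⟩ := hv
    exact Finset.mem_filter.mpr ⟨h5 p.1 p.2, rfl⟩
  calc k * l = (Finset.univ.image (fun p : Fin k × Fin l => (Vt p.1 p.2 : V k l m))).card := by
        rw [Finset.card_image_of_injective _ Vt_injective]
        simp
    _ ≤ _ := Finset.card_le_card hsub

lemma fiber2_bound (D : Finset (V k l m)) (h4 : ∀ a b, W a b ∈ D ∨ ∃ c, U a b c ∈ D) :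
    k * l ≤ (D.filter fun v => cls v = 2).card := by
  have hsub : Finset.univ.image (fun p : Fin k × Fin l => (some p : Option (Fin k × Fin l))) ⊆
      (D.filter fun v => cls v = 2).image proj := by
    intro o ho
    simp only [Finset.mem_image] at ho ⊢
    obtain ⟨⟨a, b⟩, -, rfl⟩ := ho
    rcases h4 a b with hw | ⟨c, hc⟩
    · exact ⟨W a b, Finset.mem_filter.mpr ⟨hw, rfl⟩, rfl⟩
    · exact ⟨U a b c, Finset.mem_filter.mpr ⟨hc, rfl⟩, rfl⟩
  calc k * l = (Finset.univ.image (fun p : Fin k × Fin l => (some p : Option (Fin k × Fin l)))).card := by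
        rw [Finset.card_image_of_injective _ (Option.some_injective _)]; simp
    _ ≤ ((D.filter fun v => cls v = 2).image proj).card := Finset.card_le_card hsub
    _ ≤ _ := Finset.card_image_le

lemma fiber1_bound (D : Finset (V k l m)) (h1 : ∃ a, X a ∈ D) :
    1 ≤ (D.filter fun v => cls v = 1).card := by
  obtain ⟨a, ha⟩ := h1
  exact Finset.card_pos.mpr ⟨X a, Finset.mem_filter.mpr ⟨ha, rfl⟩⟩

lemma fiber0_bound (D : Finset (V k l m)) (hy : y ∈ D) :
    1 ≤ (D.filter fun v => cls v = 0).card :=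
  Finset.card_pos.mpr ⟨y, Finset.mem_filter.mpr ⟨hy, rfl⟩⟩

def sel (g : Fin k × Fin l → Option (Fin m)) (p : Fin k × Fin l) : V k l m :=
  match g p with
  | none => W p.1 p.2
  | some c => U p.1 p.2 c

lemma proj_sel (g : Fin k × Fin l → Option (Fin m)) (p : Fin k × Fin l) :
    proj (sel g p) = some p := by
  unfold sel
  cases g p <;> rfl

lemma sel_none {g : Fin k × Fin l → Option (Fin m)} {p : Fin k × Fin l}
    (h : g p = none) : sel g p = W p.1 p.2 := by unfold sel; rw [h]

lemma sel_some {g : Fin k × Fin l → Option (Fin m)} {p : Fin k × Fin l} {c : Fin m}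
    (h : g p = some c) : sel g p = U p.1 p.2 c := by unfold sel; rw [h]

lemma sel_ne_X (g : Fin k × Fin l → Option (Fin m)) (p : Fin k × Fin l) (a : Fin k) :
    sel g p ≠ X a := by
  cases hgp : g p with
  | none => rw [sel_none hgp]; simp [W, X]
  | some c => rw [sel_some hgp]; simp [U, X]

lemma sel_ne_Vt (g : Fin k × Fin l → Option (Fin m)) (p q : Fin k × Fin l) :
    sel g p ≠ Vt q.1 q.2 := by
  cases hgp : g p with
  | none => rw [sel_none hgp]; simp [W, Vt]
  | some c => rw [sel_some hgp]; simp [U, Vt]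

lemma sel_injective (g : Fin k × Fin l → Option (Fin m)) :
    Function.Injective (sel g) := by
  intro p q h
  have := congrArg proj h
  rw [proj_sel, proj_sel] at this
  exact Option.some_injective _ this

def Dmin (a0 : Fin k) (g : Fin k × Fin l → Option (Fin m)) : Finset (V k l m) :=
  {X a0} ∪ Finset.univ.image (fun p : Fin k × Fin l => Vt p.1 p.2) ∪ Finset.univ.image (sel g)

lemma mem_Dmin (a0 : Fin k) (g : Fin k × Fin l → Option (Fin m)) (z : V k l m) :
    z ∈ Dmin a0 g ↔ z = X a0 ∨ (∃ p : Fin k × Fin l, z = Vt p.1 p.2) ∨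
      ∃ p : Fin k × Fin l, z = sel g p := by
  simp [Dmin, eq_comm]

lemma card_Dmin (a0 : Fin k) (g : Fin k × Fin l → Option (Fin m)) :
    (Dmin a0 g).card = 2 * (k * l) + 1 := by
  have d1 : Disjoint ({X a0} : Finset (V k l m))
      (Finset.univ.image (fun p : Fin k × Fin l => Vt p.1 p.2)) := by
    simp only [Finset.disjoint_left, Finset.mem_singleton, Finset.mem_image]
    rintro z rfl ⟨p, -, hp⟩
    simp [X, Vt] at hp
  have d2 : Disjoint (({X a0} : Finset (V k l m)) ∪
      Finset.univ.image (fun p : Fin k × Fin l => Vt p.1 p.2))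
      (Finset.univ.image (sel g)) := by
    simp only [Finset.disjoint_right, Finset.mem_union, Finset.mem_singleton, Finset.mem_image]
    rintro z ⟨p, -, rfl⟩ (h | ⟨q, -, hq⟩)
    · exact sel_ne_X g p a0 h
    · exact sel_ne_Vt g p q hq.symm
  rw [Dmin, Finset.card_union_of_disjoint d2, Finset.card_union_of_disjoint d1,
    Finset.card_singleton, Finset.card_image_of_injective _ Vt_injective,
    Finset.card_image_of_injective _ (sel_injective g)]
  simp; ring

lemma Dmin_injective2 (a0 a0' : Fin k) (g g' : Fin k × Fin l → Option (Fin m))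
    (h : Dmin a0 g = Dmin a0' g') : a0 = a0' ∧ g = g' := by
  constructor
  · have hx : X a0 ∈ Dmin a0' g' := h ▸ (mem_Dmin a0 g (X a0)).mpr (Or.inl rfl)
    rcases (mem_Dmin _ _ _).mp hx with h1 | ⟨p, hp⟩ | ⟨p, hp⟩
    · simpa [X] using h1
    · simp [X, Vt] at hp
    · exact absurd hp.symm (sel_ne_X g' p a0)
  · funext p
    have hx : sel g p ∈ Dmin a0' g' := h ▸ (mem_Dmin a0 g _).mpr (Or.inr (Or.inr ⟨p, rfl⟩))
    rcases (mem_Dmin _ _ _).mp hx with h1 | ⟨q, hq⟩ | ⟨q, hq⟩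
    · exact absurd h1 (sel_ne_X g p a0')
    · exact absurd hq (sel_ne_Vt g p q)
    · have hpq : p = q := by
        have := congrArg proj hq
        rw [proj_sel, proj_sel] at this
        exact Option.some_injective _ this
      subst hpq
      cases hgp : g p with
      | none =>
        cases hgp' : g' p with
        | none => rfl
        | some c' => rw [sel_none hgp, sel_some hgp'] at hq; simp [W, U] at hq
      | some c =>
        cases hgp' : g' p with
        | none => rw [sel_some hgp, sel_none hgp'] at hq; simp [W, U] at hq
        | some c' =>
          rw [sel_some hgp, sel_some hgp'] at hq
          simp only [U, Sum.inr.injEq, Prod.mk.injEq] at hq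
          rw [hq.2.2]

lemma Dmin_tds (a0 : Fin k) (g : Fin k × Fin l → Option (Fin m))
    (hg : ∀ a, ∃ b, g (a, b) = none) :
    IsTotalDominatingSet (Gklm k l m) (Dmin a0 g) := by
  rw [tds_iff]
  refine ⟨⟨a0, (mem_Dmin _ _ _).mpr (Or.inl rfl)⟩, fun a => ?_, fun a b => ?_,
    fun a b => ?_, fun a b _ => (mem_Dmin _ _ _).mpr (Or.inr (Or.inl ⟨(a, b), rfl⟩))⟩
  · right
    obtain ⟨b, hb⟩ := hg a
    exact ⟨b, (mem_Dmin _ _ _).mpr (Or.inr (Or.inr ⟨(a, b), (sel_none hb).symm⟩))⟩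
  · exact Or.inr ((mem_Dmin _ _ _).mpr (Or.inr (Or.inl ⟨(a, b), rfl⟩)))
  · cases hgp : g (a, b) with
    | none =>
      exact Or.inl ((mem_Dmin _ _ _).mpr (Or.inr (Or.inr ⟨(a, b), (sel_none hgp).symm⟩)))
    | some c =>
      exact Or.inr ⟨c, (mem_Dmin _ _ _).mpr (Or.inr (Or.inr ⟨(a, b), (sel_some hgp).symm⟩))⟩

lemma tds_card_lb (hm : 0 < m) {D : Finset (V k l m)}
    (hD : IsTotalDominatingSet (Gklm k l m) D) :
    2 * (k * l) + 1 ≤ D.card ∧ (y ∈ D → 2 * (k * l) + 2 ≤ D.card) := by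
  rw [tds_iff] at hD
  obtain ⟨h1, h2, h3, h4, h5⟩ := hD
  have hd := card_decomp D
  rw [Fin.sum_univ_four] at hd
  have b3 := fiber3_bound D (fun a b => h5 a b ⟨0, hm⟩)
  have b2 := fiber2_bound D h4
  have b1 := fiber1_bound D h1
  constructor
  · omega
  · intro hy
    have b0 := fiber0_bound D hy
    omega

lemma min_tds_eq (hm : 0 < m) {D : Finset (V k l m)}
    (hD : IsTotalDominatingSet (Gklm k l m) D) (hcard : D.card = 2 * (k * l) + 1) :
    ∃ (a0 : Fin k) (g : Fin k × Fin l → Option (Fin m)),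
      (∀ a, ∃ b, g (a, b) = none) ∧ D = Dmin a0 g := by
  classical
  have hy : y ∉ D := by
    intro hy
    have := (tds_card_lb hm hD).2 hy
    omega
  rw [tds_iff] at hD
  obtain ⟨h1, h2, h3, h4, h5⟩ := hD
  obtain ⟨a0, ha0⟩ := h1
  set g : Fin k × Fin l → Option (Fin m) := fun p =>
    if h : W p.1 p.2 ∈ D then none
    else some (Classical.choose ((h4 p.1 p.2).resolve_left h)) with hgdef
  have hg : ∀ a, ∃ b, g (a, b) = none := by
    intro a
    obtain ⟨b, hb⟩ := (h2 a).resolve_left hy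
    exact ⟨b, by simp only [hgdef]; exact dif_pos hb⟩
  have hsub : Dmin a0 g ⊆ D := by
    intro z hz
    rcases (mem_Dmin _ _ _).mp hz with rfl | ⟨p, rfl⟩ | ⟨p, rfl⟩
    · exact ha0
    · exact h5 p.1 p.2 ⟨0, hm⟩
    · by_cases h : W p.1 p.2 ∈ D
      · rwa [sel_none (by simp only [hgdef]; exact dif_pos h)]
      · rw [sel_some (by simp only [hgdef]; exact dif_neg h)]
        exact Classical.choose_spec ((h4 p.1 p.2).resolve_left h)
  refine ⟨a0, g, hg, ?_⟩
  exact (Finset.eq_of_subset_of_card_le hsub (by rw [hcard, card_Dmin])).symm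

lemma tdn_eq (hk : 0 < k) (hl : 0 < l) (hm : 0 < m) :
    totalDominationNumber (Gklm k l m) = 2 * (k * l) + 1 := by
  have hmem : 2 * (k * l) + 1 ∈
      {n | ∃ D : Finset (V k l m), IsTotalDominatingSet (Gklm k l m) D ∧ D.card = n} := by
    refine ⟨Dmin ⟨0, hk⟩ (fun _ => none), Dmin_tds _ _ (fun a => ⟨⟨0, hl⟩, rfl⟩), card_Dmin _ _⟩
  refine le_antisymm (Nat.sInf_le hmem) ?_
  have hmem' := Nat.sInf_mem (Set.nonempty_of_mem hmem)
  obtain ⟨D, hD, hc⟩ := hmem'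
  rw [totalDominationNumber, ← hc]
  exact (tds_card_lb hm hD).1

end Gp

/-- `G(k,l,m)` has exactly `k·((m+1)^l − m^l)^k` minimum total dominating sets. -/
theorem Gklm_numMinTotalDomSets (k l m : ℕ) (hk : 0 < k) (hl : 0 < l) (hm : 0 < m) :
    numMinTotalDomSets (Gklm k l m) = k * ((m + 1) ^ l - m ^ l) ^ k := by
  classical
  rw [numMinTotalDomSets, Gp.tdn_eq hk hl hm]
  set F : (Fin k × {g : Fin k × Fin l → Option (Fin m) // ∀ a, ∃ b, g (a, b) = none}) →
      Finset (Gp.V k l m) := fun t => Gp.Dmin t.1 t.2.1 with hF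
  have hset : {D : Finset (Gp.V k l m) |
      IsTotalDominatingSet (Gklm k l m) D ∧ D.card = 2 * (k * l) + 1} = Set.range F := by
    ext D
    constructor
    · rintro ⟨hD, hc⟩
      obtain ⟨a0, g, hg, rfl⟩ := Gp.min_tds_eq hm hD hc
      exact ⟨(a0, ⟨g, hg⟩), rfl⟩
    · rintro ⟨⟨a0, g, hg⟩, rfl⟩
      exact ⟨Gp.Dmin_tds a0 g hg, Gp.card_Dmin a0 g⟩
  have hFinj : Function.Injective F := by
    rintro ⟨a0, g, hg⟩ ⟨a0', g', hg'⟩ h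
    obtain ⟨h1, h2⟩ := Gp.Dmin_injective2 a0 a0' g g' h
    subst h1
    subst h2
    rfl
  rw [hset, ← Set.image_univ, Set.ncard_image_of_injective _ hFinj, Set.ncard_univ,
    Nat.card_eq_fintype_card]
  -- card T
  have e : {g : Fin k × Fin l → Option (Fin m) // ∀ a, ∃ b, g (a, b) = none} ≃
      (Fin k → {f : Fin l → Option (Fin m) // ∃ b, f b = none}) :=
    { toFun := fun g a => ⟨fun b => g.1 (a, b), g.2 a⟩
      invFun := fun F => ⟨fun p => (F p.1).1 p.2, fun a => (F a).2⟩
      left_inv := fun g => by apply Subtype.ext; funext p; rfl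
      right_inv := fun F => by funext a; apply Subtype.ext; rfl }
  have card_row : Fintype.card {f : Fin l → Option (Fin m) // ∃ b, f b = none} =
      (m + 1) ^ l - m ^ l := by
    have e2 : {f : Fin l → Option (Fin m) // ¬ ∃ b, f b = none} ≃ (Fin l → Fin m) :=
      { toFun := fun f b => (f.1 b).get (by
          rcases h : f.1 b with _ | c
          · exact absurd ⟨b, h⟩ f.2
          · simp)
        invFun := fun g => ⟨fun b => some (g b), by simp⟩
        left_inv := fun f => by
          apply Subtype.ext; funext b; simp
        right_inv := fun g => by funext b; simp }
    have hcompl : Fintype.card {f : Fin l → Option (Fin m) // ¬ ∃ b, f b = none} = m ^ l := by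
      rw [Fintype.card_congr e2]; simp
    have htot : Fintype.card (Fin l → Option (Fin m)) = (m + 1) ^ l := by simp
    have h2 : Fintype.card {f : Fin l → Option (Fin m) // ¬ ∃ b, f b = none} =
        Fintype.card (Fin l → Option (Fin m)) -
          Fintype.card {f : Fin l → Option (Fin m) // ∃ b, f b = none} :=
      Fintype.card_subtype_compl _
    have hle : Fintype.card {f : Fin l → Option (Fin m) // ∃ b, f b = none}
        ≤ Fintype.card (Fin l → Option (Fin m)) := Fintype.card_subtype_le _
    rw [hcompl, htot] at h2
    rw [htot] at hle
    rw [h2]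
    exact (Nat.sub_sub_self hle).symm
  rw [Fintype.card_prod, Fintype.card_fin, Fintype.card_congr e, Fintype.card_fun,
    card_row, Fintype.card_fin]
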